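/- Fix 0 ≤ α < 1 and 1 < ε < 3^{(1-α)/(1+α)}. For the polynomials P_n(z) = z^n − 3^n on the annulus D_ε = {z : 3/ε < |z| < 3ε}, one has inf_{z ∈ D_ε} |P_n'(z)|/(1 + |P_n(z)|^α) → ∞ as n → ∞. -/

import Mathlib

/-- For P_n(z) = z^n - 3^n on the annulus 3/ε < |z| < 3ε (with 1 < ε < 3^((1-α)/(1+α)),
0 ≤ α < 1), the infimum of |P_n'(z)|/(1+|P_n(z)|^α) over the annulus tends to ∞. -/
theorem stmt_3 (α ε : ℝ) (hα0 : 0 ≤ α) (hα1 : α < 1) (hε1 : 1 < ε)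
    (hε : ε < (3 : ℝ) ^ ((1 - α) / (1 + α))) :
    ∀ M : ℝ, ∃ N : ℕ, ∀ n ≥ N, ∀ z : ℂ, 3 / ε < ‖z‖ → ‖z‖ < 3 * ε →
      M ≤ ‖deriv (fun w : ℂ => w ^ n - 3 ^ n) z‖ / (1 + ‖z ^ n - (3 : ℂ) ^ n‖ ^ α) := by
  intro M
  have hε0 : (0:ℝ) < ε := zero_lt_one.trans hε1
  have h3 : (0:ℝ) < 3 := by norm_num
  have h3ε : (0:ℝ) < 3 * ε := by positivity
  set q : ℝ := (3 / ε) / (3 * ε) ^ α with hqdef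
  set C : ℝ := (ε / 3) / (2 * 2 ^ α) with hCdef
  have hkey : ε ^ (1 + α) < (3:ℝ) ^ (1 - α) := by
    have h := Real.rpow_lt_rpow hε0.le hε (by linarith : (0:ℝ) < 1 + α)
    rwa [← Real.rpow_mul (by norm_num : (0:ℝ) ≤ 3),
      div_mul_cancel₀ _ (by positivity : (1:ℝ) + α ≠ 0)] at h
  have hq : 1 < q := by
    rw [hqdef, lt_div_iff₀ (by positivity), one_mul, lt_div_iff₀ hε0]
    calc (3*ε) ^ α * ε = 3 ^ α * (ε ^ α * ε) := by
          rw [Real.mul_rpow h3.le hε0.le]; ring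
      _ = 3 ^ α * ε ^ (1 + α) := by
          rw [Real.rpow_add hε0, Real.rpow_one]; ring
      _ < 3 ^ α * 3 ^ (1 - α) :=
          mul_lt_mul_of_pos_left hkey (Real.rpow_pos_of_pos h3 α)
      _ = 3 := by rw [← Real.rpow_add h3]; norm_num
  have hC : 0 < C := by rw [hCdef]; positivity
  have htend : Filter.Tendsto (fun n : ℕ => C * q ^ n) Filter.atTop Filter.atTop :=
    (tendsto_pow_atTop_atTop_of_one_lt hq).const_mul_atTop hC
  obtain ⟨N, hN⟩ := Filter.eventually_atTop.mp (htend.eventually_ge_atTop M)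
  refine ⟨max N 1, fun n hn z hz1 hz2 => ?_⟩
  have hn1 : 1 ≤ n := le_trans (le_max_right _ _) hn
  have hMn : M ≤ C * q ^ n := hN n (le_trans (le_max_left _ _) hn)
  have hzpos : (0:ℝ) < ‖z‖ := lt_trans (by positivity) hz1
  -- derivative norm
  have hnorm : ‖deriv (fun w : ℂ => w ^ n - 3 ^ n) z‖ = n * ‖z‖ ^ (n - 1) := by
    rw [((hasDerivAt_pow n z).sub_const ((3:ℂ) ^ n)).deriv, norm_mul, norm_pow, Complex.norm_natCast]
  -- numerator lower bound
  have hnum : (3 / ε) ^ (n - 1) ≤ (n : ℝ) * ‖z‖ ^ (n - 1) := by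
    have h1 : (3 / ε) ^ (n - 1) ≤ ‖z‖ ^ (n - 1) :=
      pow_le_pow_left₀ (by positivity) hz1.le _
    have h2 : (1:ℝ) ≤ (n : ℝ) := by exact_mod_cast hn1
    nlinarith [pow_nonneg hzpos.le (n-1)]
  -- denominator upper bound
  set D : ℝ := 2 * (2 * (3 * ε) ^ n) ^ α with hDdef
  have hbase1 : (1:ℝ) ≤ 2 * (3 * ε) ^ n := by
    have : (1:ℝ) ≤ (3 * ε) ^ n := one_le_pow₀ (by linarith)
    linarith
  have hden : 1 + ‖z ^ n - (3 : ℂ) ^ n‖ ^ α ≤ D := by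
    have ht : ‖z ^ n - (3 : ℂ) ^ n‖ ≤ 2 * (3 * ε) ^ n := by
      calc ‖z ^ n - (3 : ℂ) ^ n‖ ≤ ‖z ^ n‖ + ‖(3 : ℂ) ^ n‖ := norm_sub_le _ _
        _ = ‖z‖ ^ n + 3 ^ n := by
            rw [norm_pow, norm_pow]; norm_num
        _ ≤ (3 * ε) ^ n + (3 * ε) ^ n :=
            add_le_add (pow_le_pow_left₀ hzpos.le hz2.le n)
              (pow_le_pow_left₀ h3.le (by linarith) n)
        _ = 2 * (3 * ε) ^ n := by ring
    have h1 : ‖z ^ n - (3 : ℂ) ^ n‖ ^ α ≤ (2 * (3 * ε) ^ n) ^ α :=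
      Real.rpow_le_rpow (norm_nonneg _) ht hα0
    have h2 : (1:ℝ) ≤ (2 * (3 * ε) ^ n) ^ α := by
      calc (1:ℝ) = 1 ^ α := (Real.one_rpow α).symm
        _ ≤ (2 * (3 * ε) ^ n) ^ α := Real.rpow_le_rpow zero_le_one hbase1 hα0
    rw [hDdef]; linarith
  have hdenpos : (0:ℝ) < 1 + ‖z ^ n - (3 : ℂ) ^ n‖ ^ α := by positivity
  -- key algebraic identity
  have hpowsplit : ((3 * ε) ^ n : ℝ) ^ α = ((3 * ε) ^ α) ^ n := by
    rw [← Real.rpow_natCast (3 * ε) n, ← Real.rpow_natCast ((3 * ε) ^ α) n,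
      ← Real.rpow_mul h3ε.le, ← Real.rpow_mul h3ε.le]
    ring_nf
  have hpown : (3 / ε) ^ n = (3 / ε) ^ (n - 1) * (3 / ε) := by
    rw [← pow_succ, Nat.sub_add_cancel hn1]
  have heq : C * q ^ n = (3 / ε) ^ (n - 1) / D := by
    have hr1 : ((3 * ε) ^ α : ℝ) ≠ 0 := ne_of_gt (Real.rpow_pos_of_pos h3ε α)
    have hr2 : ((2:ℝ) ^ α) ≠ 0 := ne_of_gt (Real.rpow_pos_of_pos two_pos α)
    have hr3 : ((3 * ε) ^ α : ℝ) ^ n ≠ 0 := pow_ne_zero _ hr1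
    rw [hCdef, hqdef, hDdef, Real.mul_rpow two_pos.le (by positivity), hpowsplit,
      div_pow, hpown]
    field_simp
  -- conclude
  calc M ≤ C * q ^ n := hMn
    _ = (3 / ε) ^ (n - 1) / D := heq
    _ ≤ ((n : ℝ) * ‖z‖ ^ (n - 1)) / (1 + ‖z ^ n - (3 : ℂ) ^ n‖ ^ α) := by
        apply div_le_div₀ (by positivity) hnum hdenpos hden
    _ = ‖deriv (fun w : ℂ => w ^ n - 3 ^ n) z‖ / (1 + ‖z ^ n - (3 : ℂ) ^ n‖ ^ α) := by
        rw [hnorm]
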